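/- Frame composition is not compositional in general: there exists a psi-calculus (satisfying all requisites) and frames F, G, H such that F ≃ G but not F ⊗ H ≃ G ⊗ H. Concretely, take assertions Ψ, Ψ', and Ψ_a for each name a, conditions φ' and φ_a, entailment given by Ψ_a ⊢ φ_a and Ψ' ⊢ φ' (and nothing else except unit laws), and composition defined by Ψ ⊗ Ψ = Ψ and all other nonunit compositions yielding Ψ'; then (ν a)Ψ_a ≃ Ψ as frames, but Ψ ⊗ (ν a)Ψ_a is not equivalent to Ψ ⊗ Ψ. -/

import Mathlib

/-- Nominal sets of assertions and conditions with an equivariant entailment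
relation.  Names are drawn from the countably infinite set ℕ, acted on by
permutations. -/
structure NomEnt where
  A : Type                      -- assertions
  C : Type                      -- conditions
  actA : Equiv.Perm ℕ → A → A
  actC : Equiv.Perm ℕ → C → C
  actA_one : ∀ x, actA 1 x = x
  actA_mul : ∀ π σ x, actA (π * σ) x = actA π (actA σ x)
  actC_one : ∀ x, actC 1 x = x
  actC_mul : ∀ π σ x, actC (π * σ) x = actC π (actC σ x)
  suppA : A → Finset ℕ          -- (finite) support of an assertion
  suppC : C → Finset ℕ          -- (finite) support of a condition
  suppA_spec : ∀ x (π : Equiv.Perm ℕ), (∀ a ∈ suppA x, π a = a) → actA π x = x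
  suppC_spec : ∀ x (π : Equiv.Perm ℕ), (∀ a ∈ suppC x, π a = a) → actC π x = x
  ent : A → C → Prop
  ent_equivariant : ∀ (π : Equiv.Perm ℕ) Ψ φ, ent Ψ φ ↔ ent (actA π Ψ) (actC π φ)

/-- A frame is a finite list of binding names together with an assertion. -/
def Frame (S : NomEnt) := List ℕ × S.A

/-- Alpha-equivalence of frames: the frames are related by a permutation π
mapping the binders of one to the binders of the other, mapping one assertion
to the other, and fixing all names outside the two binder lists. -/
def FrameAlpha (S : NomEnt) (F G : Frame S) : Prop :=
  ∃ π : Equiv.Perm ℕ,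
    F.1.map (fun a => π a) = G.1 ∧
    S.actA π F.2 = G.2 ∧
    ∀ a : ℕ, a ∉ F.1 → a ∉ G.1 → π a = a

/-- Frame entailment: `(ν as)Ψ ⊢ φ` iff some alpha-variant of the frame has
its binders fresh for φ and its assertion entailing φ. -/
def FrameEnt (S : NomEnt) (F : Frame S) (φ : S.C) : Prop :=
  ∃ G : Frame S, FrameAlpha S F G ∧ (∀ c ∈ G.1, c ∉ S.suppC φ) ∧ S.ent G.2 φ

/-- Frame equivalence: entailing the same conditions. -/
def FrameEquiv (S : NomEnt) (F G : Frame S) : Prop :=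
  ∀ φ : S.C, FrameEnt S F φ ↔ FrameEnt S G φ

/-- Assertion equivalence. -/
def AEquiv (S : NomEnt) (Ψ Ψ' : S.A) : Prop := ∀ φ, S.ent Ψ φ ↔ S.ent Ψ' φ

/-- A full psi-calculus over nominal assertions/conditions: terms, channel
equivalence, composition and unit, satisfying all the requisites on valid
psi-calculus parameters. -/
structure PsiCalc extends NomEnt where
  T : Type                         -- data terms
  chanEq : T → T → C               -- channel equivalence
  comp : A → A → A                 -- composition of assertions
  unit : A                         -- unit assertion
  chanSym : ∀ Ψ M N, ent Ψ (chanEq M N) → ent Ψ (chanEq N M)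
  chanTrans : ∀ Ψ M N L,
    ent Ψ (chanEq M N) → ent Ψ (chanEq N L) → ent Ψ (chanEq M L)
  compositional : ∀ Ψ Ψ' Ψ'', AEquiv toNomEnt Ψ Ψ' →
    AEquiv toNomEnt (comp Ψ Ψ'') (comp Ψ' Ψ'')
  identity : ∀ Ψ, AEquiv toNomEnt (comp Ψ unit) Ψ
  assoc : ∀ Ψ Ψ' Ψ'', AEquiv toNomEnt (comp (comp Ψ Ψ') Ψ'') (comp Ψ (comp Ψ' Ψ''))
  comm : ∀ Ψ Ψ', AEquiv toNomEnt (comp Ψ Ψ') (comp Ψ' Ψ)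

/-- Composition of frames (for representatives whose binders are chosen
mutually fresh): concatenate the binders and compose the assertions. -/
def frameComp (S : PsiCalc) (F G : Frame S.toNomEnt) : Frame S.toNomEnt :=
  (F.1 ++ G.1, S.comp F.2 G.2)

/-! ### Auxiliary construction for the counterexample -/

inductive A0 : Type where
  | unit | psi | psi' | psia (a : ℕ)

inductive C0 : Type where
  | phi' | phiu | phia (a : ℕ)

def actA0 (π : Equiv.Perm ℕ) : A0 → A0
  | .psia a => .psia (π a)
  | x => x

def actC0 (π : Equiv.Perm ℕ) : C0 → C0
  | .phia a => .phia (π a)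
  | x => x

def suppA0 : A0 → Finset ℕ
  | .psia a => {a}
  | _ => ∅

def suppC0 : C0 → Finset ℕ
  | .phia a => {a}
  | _ => ∅

def ent0 : A0 → C0 → Prop
  | .psia a, .phia b => a = b
  | .psi', .phi' => True
  | .unit, .phiu => True
  | _, _ => False

def comp0 : A0 → A0 → A0
  | .unit, x => x
  | x, .unit => x
  | .psi, .psi => .psi
  | _, _ => .psi'

def N0 : NomEnt where
  A := A0
  C := C0
  actA := actA0
  actC := actC0
  actA_one := by intro x; cases x <;> simp [actA0]
  actA_mul := by intro π σ x; cases x <;> simp [actA0]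
  actC_one := by intro x; cases x <;> simp [actC0]
  actC_mul := by intro π σ x; cases x <;> simp [actC0]
  suppA := suppA0
  suppC := suppC0
  suppA_spec := by
    intro x π h; cases x <;> simp_all [actA0, suppA0]
  suppC_spec := by
    intro x π h; cases x <;> simp_all [actC0, suppC0]
  ent := ent0
  ent_equivariant := by
    intro π Ψ φ; cases Ψ <;> cases φ <;> simp [ent0, actA0, actC0]

theorem aequiv_eq (x y : A0) (h : ∀ φ, ent0 x φ ↔ ent0 y φ) : x = y := by
  cases x <;> cases y <;>
    first
    | rfl
    | exact ((h .phiu).mp trivial).elim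
    | exact ((h .phiu).mpr trivial).elim
    | exact ((h .phi').mp trivial).elim
    | exact ((h .phi').mpr trivial).elim
    | (rename_i a; exact ((h (.phia a)).mpr rfl).elim)
    | (rename_i a; exact ((h (.phia a)).mp rfl).elim)
    | (rename_i a b; exact congrArg A0.psia (((h (.phia a)).mp rfl : b = a).symm))

theorem comp0_unit (x : A0) : comp0 x .unit = x := by cases x <;> rfl

def S0 : PsiCalc where
  toNomEnt := N0
  T := Unit
  chanEq := fun _ _ => C0.phi'
  comp := comp0
  unit := A0.unit
  chanSym := fun _ _ _ h => h
  chanTrans := fun _ _ _ _ h _ => h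
  compositional := by
    intro Ψ Ψ' Ψ'' h
    have : Ψ = Ψ' := aequiv_eq Ψ Ψ' h
    subst this; intro φ; exact Iff.rfl
  identity := by
    intro Ψ φ; exact iff_of_eq (congrArg (fun x => N0.ent x φ) (comp0_unit Ψ))
  assoc := by
    intro Ψ Ψ' Ψ'' φ
    rw [show comp0 (comp0 Ψ Ψ') Ψ'' = comp0 Ψ (comp0 Ψ' Ψ'') from by
      cases Ψ <;> cases Ψ' <;> cases Ψ'' <;> rfl]
  comm := by
    intro Ψ Ψ' φ
    rw [show comp0 Ψ Ψ' = comp0 Ψ' Ψ from by cases Ψ <;> cases Ψ' <;> rfl]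

theorem not_frameEnt_psi (φ : C0) :
    ¬ FrameEnt S0.toNomEnt (([], A0.psi) : Frame S0.toNomEnt) φ := by
  rintro ⟨G, ⟨π, h1, h2, h3⟩, hfresh, hent⟩
  rw [← h2] at hent
  cases φ <;> exact hent

theorem not_frameEnt_psia (b : ℕ) (φ : C0) :
    ¬ FrameEnt S0.toNomEnt (([b], A0.psia b) : Frame S0.toNomEnt) φ := by
  rintro ⟨G, ⟨π, h1, h2, h3⟩, hfresh, hent⟩
  rw [← h2] at hent
  have hb : π b ∈ G.1 := by rw [← h1]; simp
  cases φ with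
  | phia c =>
      have : π b = c := hent
      exact hfresh _ hb
        (by rw [show S0.toNomEnt.suppC (C0.phia c) = {c} from rfl, this]
            exact Finset.mem_singleton_self c)
  | phi' => exact hent
  | phiu => exact hent

/-- frame composition is not compositional in general.  There
is a psi-calculus (satisfying all the requisites) with an assertion `Ψ` and
an assertion `Ψa` such that the frame `(ν a)Ψa` is equivalent to the frame
`Ψ` (with no binders), the binder `a` is fresh for `Ψ`, yet composing both
with the frame `Ψ` yields inequivalent frames:
`Ψ ⊗ (ν a)Ψa` is not equivalent to `Ψ ⊗ Ψ`. -/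
theorem frame_composition_not_compositional :
    ∃ (S : PsiCalc) (a : ℕ) (Ψa Ψ : S.A),
      a ∉ S.suppA Ψ ∧
      FrameEquiv S.toNomEnt ([a], Ψa) ([], Ψ) ∧
      ¬ FrameEquiv S.toNomEnt
          (frameComp S (([], Ψ) : Frame S.toNomEnt) (([a], Ψa) : Frame S.toNomEnt))
          (frameComp S (([], Ψ) : Frame S.toNomEnt) (([], Ψ) : Frame S.toNomEnt)) := by
  refine ⟨S0, 0, A0.psia 0, A0.psi, ?_, ?_, ?_⟩
  · simp [S0, N0, suppA0]
  · intro φ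
    exact iff_of_false (not_frameEnt_psia 0 φ) (not_frameEnt_psi φ)
  · intro h
    have h2 := (h C0.phi').mp ?_
    · exact not_frameEnt_psi C0.phi' h2
    · refine ⟨([0], A0.psi'), ⟨1, by simp [frameComp], ?_, fun a _ _ => rfl⟩, ?_, trivial⟩
      · exact N0.actA_one _
      · intro c hc
        simp [S0, N0, suppC0]
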